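/- arXiv:math/0412403 — 3 statements merged into one kernel-verified Lean document; each statement's English description precedes it below -/
import Mathlib

section
/- Existence and uniqueness for the backward delay integro-differential equation: let T > 0, r > 0, a₀ ∈ ℝ, γ ∈ ℝ, and a₁ ∈ L²([−r,0];ℝ). Then there exists a unique continuous function w₀ : [0,T] → ℝ such that for every t ∈ [0,T], w₀(t) = γ + ∫_t^T ( a₀·w₀(s) + ∫_{−r}^{0} a₁(ξ)·w₀(s−ξ)·𝟙_{{s−ξ ≤ T}} dξ ) ds. -/
open MeasureTheory Set intervalIntegral
open scoped Nat NNReal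

namespace BDEaux

noncomputable def ext (T : ℝ) (hT : 0 ≤ T) (w : C(Icc (0:ℝ) T, ℝ)) : ℝ → ℝ :=
  Set.IccExtend hT w

noncomputable def Gf (T r a₀ : ℝ) (a₁ : ℝ → ℝ) (w : ℝ → ℝ) (s : ℝ) : ℝ :=
  a₀ * w s + ∫ ξ in Icc (-r) 0, a₁ ξ * w (s - ξ) * (if s - ξ ≤ T then (1 : ℝ) else 0)

noncomputable def Kc (r a₀ : ℝ) (a₁ : ℝ → ℝ) : ℝ :=
  |a₀| + ∫ ξ in Icc (-r) 0, |a₁ ξ|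

variable {T r a₀ : ℝ} {a₁ : ℝ → ℝ}

lemma Kc_nonneg : 0 ≤ Kc r a₀ a₁ :=
  add_nonneg (abs_nonneg _) (integral_nonneg fun _ => abs_nonneg _)

lemma a1_int (ha : MemLp a₁ 2 (volume.restrict (Icc (-r) 0))) :
    Integrable a₁ (volume.restrict (Icc (-r) 0)) := by
  haveI : IsFiniteMeasure (volume.restrict (Icc (-r) 0)) :=
    ⟨by rw [Measure.restrict_apply_univ]; exact measure_Icc_lt_top⟩
  exact ha.integrable one_le_two

lemma ext_cont (hT : 0 ≤ T) (w : C(Icc (0:ℝ) T, ℝ)) : Continuous (ext T hT w) :=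
  w.continuous.Icc_extend'

lemma ext_bound (hT : 0 ≤ T) (w : C(Icc (0:ℝ) T, ℝ)) (u : ℝ) : |ext T hT w u| ≤ ‖w‖ := by
  haveI : CompactSpace (Icc (0:ℝ) T) := isCompact_iff_compactSpace.mp isCompact_Icc
  exact w.norm_coe_le_norm _

lemma ext_of_mem (hT : 0 ≤ T) (w : C(Icc (0:ℝ) T, ℝ)) {u : ℝ} (hu : u ∈ Icc (0:ℝ) T) :
    ext T hT w u = w ⟨u, hu⟩ :=
  Set.IccExtend_of_mem hT (⇑w) hu

lemma integrand_int (ha : MemLp a₁ 2 (volume.restrict (Icc (-r) 0)))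
    {w : ℝ → ℝ} (hw : Continuous w) {M : ℝ} (hM : ∀ u, |w u| ≤ M) (s : ℝ) :
    Integrable (fun ξ => a₁ ξ * w (s - ξ) * (if s - ξ ≤ T then (1 : ℝ) else 0))
      (volume.restrict (Icc (-r) 0)) := by
  have hM0 : 0 ≤ M := (abs_nonneg _).trans (hM 0)
  refine (((a1_int ha).abs.mul_const M).mono' ?_ ?_)
  · refine (ha.aestronglyMeasurable.mul ?_).mul ?_
    · exact (hw.comp (continuous_const.sub continuous_id)).aestronglyMeasurable
    · exact ((Measurable.ite (measurableSet_le (measurable_const.sub measurable_id)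
        measurable_const) measurable_const measurable_const).aestronglyMeasurable)
  · refine ae_of_all _ fun ξ => ?_
    rw [Real.norm_eq_abs, abs_mul, abs_mul]
    by_cases h : s - ξ ≤ T
    · simp only [h, if_true, abs_one, mul_one]
      exact mul_le_mul_of_nonneg_left (hM _) (abs_nonneg _)
    · simp only [h, if_false, abs_zero, mul_zero]
      positivity

lemma inner_abs_le (ha : MemLp a₁ 2 (volume.restrict (Icc (-r) 0)))
    {w : ℝ → ℝ} (hw : Continuous w) {M : ℝ} (hM : ∀ u, |w u| ≤ M) {s B : ℝ} (hB : 0 ≤ B)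
    (hwB : ∀ u, s ≤ u → u ≤ T → |w u| ≤ B) :
    |∫ ξ in Icc (-r) 0, a₁ ξ * w (s - ξ) * (if s - ξ ≤ T then (1 : ℝ) else 0)|
      ≤ (∫ ξ in Icc (-r) 0, |a₁ ξ|) * B := by
  calc |∫ ξ in Icc (-r) 0, a₁ ξ * w (s - ξ) * (if s - ξ ≤ T then (1 : ℝ) else 0)|
      ≤ ∫ ξ in Icc (-r) 0, |a₁ ξ * w (s - ξ) * (if s - ξ ≤ T then (1 : ℝ) else 0)| := by
        have := MeasureTheory.norm_integral_le_integral_norm (μ := volume.restrict (Icc (-r) 0))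
          (f := fun ξ => a₁ ξ * w (s - ξ) * (if s - ξ ≤ T then (1 : ℝ) else 0))
        simpa only [Real.norm_eq_abs] using this
    _ ≤ ∫ ξ in Icc (-r) 0, |a₁ ξ| * B := by
        refine integral_mono_ae ((integrand_int ha hw hM s).abs) ((a1_int ha).abs.mul_const B) ?_
        refine (ae_restrict_iff' measurableSet_Icc).2 (ae_of_all _ fun ξ hξ => ?_)
        dsimp only
        rw [abs_mul, abs_mul]
        by_cases h : s - ξ ≤ T
        · simp only [h, if_true, abs_one, mul_one]
          have h1 : s ≤ s - ξ := by have := hξ.2; linarith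
          exact mul_le_mul_of_nonneg_left (hwB _ h1 h) (abs_nonneg _)
        · simp only [h, if_false, abs_zero, mul_zero]
          positivity
    _ = (∫ ξ in Icc (-r) 0, |a₁ ξ|) * B := integral_mul_const _ _

lemma Gf_abs_le (ha : MemLp a₁ 2 (volume.restrict (Icc (-r) 0)))
    {w : ℝ → ℝ} (hw : Continuous w) {M : ℝ} (hM : ∀ u, |w u| ≤ M) {s B : ℝ} (hB : 0 ≤ B)
    (hws : |w s| ≤ B) (hwB : ∀ u, s ≤ u → u ≤ T → |w u| ≤ B) :
    |Gf T r a₀ a₁ w s| ≤ Kc r a₀ a₁ * B := by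
  have h1 := inner_abs_le (T := T) ha hw hM hB hwB
  calc |Gf T r a₀ a₁ w s|
      ≤ |a₀ * w s| + |∫ ξ in Icc (-r) 0, a₁ ξ * w (s - ξ) * (if s - ξ ≤ T then (1:ℝ) else 0)| :=
        abs_add_le _ _
    _ ≤ |a₀| * B + (∫ ξ in Icc (-r) 0, |a₁ ξ|) * B := by
        refine add_le_add ?_ h1
        rw [abs_mul]
        exact mul_le_mul_of_nonneg_left hws (abs_nonneg _)
    _ = Kc r a₀ a₁ * B := by rw [Kc, add_mul]

lemma Gf_meas (ha : MemLp a₁ 2 (volume.restrict (Icc (-r) 0)))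
    {w : ℝ → ℝ} (hw : Continuous w) :
    AEStronglyMeasurable (Gf T r a₀ a₁ w) volume := by
  refine AEStronglyMeasurable.add ((continuous_const.mul hw).aestronglyMeasurable) ?_
  have h : AEStronglyMeasurable
      (fun p : ℝ × ℝ => a₁ p.2 * w (p.1 - p.2) * (if p.1 - p.2 ≤ T then (1:ℝ) else 0))
      (volume.prod (volume.restrict (Icc (-r) 0))) := by
    refine AEMeasurable.aestronglyMeasurable ?_
    refine (AEMeasurable.mul (AEMeasurable.mul ?_ ?_) ?_)
    · exact (ha.aestronglyMeasurable.aemeasurable).comp_snd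
    · exact ((hw.comp (continuous_fst.sub continuous_snd)).measurable).aemeasurable
    · exact (Measurable.ite (measurableSet_le (measurable_fst.sub measurable_snd)
        measurable_const) measurable_const measurable_const).aemeasurable
  exact h.integral_prod_right'

lemma Gf_II (ha : MemLp a₁ 2 (volume.restrict (Icc (-r) 0)))
    {w : ℝ → ℝ} (hw : Continuous w) {M : ℝ} (hM : ∀ u, |w u| ≤ M) (a b : ℝ) :
    IntervalIntegrable (Gf T r a₀ a₁ w) volume a b := by
  have hM0 : 0 ≤ M := (abs_nonneg _).trans (hM 0)
  rw [intervalIntegrable_iff]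
  refine Integrable.mono' (g := fun _ => Kc r a₀ a₁ * M)
    (integrableOn_const (hs := measure_Ioc_lt_top.ne)) ((Gf_meas ha hw).restrict)
    (ae_of_all _ fun s => ?_)
  rw [Real.norm_eq_abs]
  exact Gf_abs_le ha hw hM hM0 (hM s) (fun u _ _ => hM u)

lemma Gf_sub (ha : MemLp a₁ 2 (volume.restrict (Icc (-r) 0)))
    {w v : ℝ → ℝ} (hw : Continuous w) (hv : Continuous v)
    {Mw Mv : ℝ} (hMw : ∀ u, |w u| ≤ Mw) (hMv : ∀ u, |v u| ≤ Mv) (s : ℝ) :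
    Gf T r a₀ a₁ w s - Gf T r a₀ a₁ v s = Gf T r a₀ a₁ (fun u => w u - v u) s := by
  have hsub : (∫ ξ in Icc (-r) 0,
        a₁ ξ * (w (s - ξ) - v (s - ξ)) * (if s - ξ ≤ T then (1:ℝ) else 0))
      = (∫ ξ in Icc (-r) 0, a₁ ξ * w (s - ξ) * (if s - ξ ≤ T then (1:ℝ) else 0))
        - ∫ ξ in Icc (-r) 0, a₁ ξ * v (s - ξ) * (if s - ξ ≤ T then (1:ℝ) else 0) := by
    rw [← integral_sub (integrand_int ha hw hMw s) (integrand_int ha hv hMv s)]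
    congr 1
    funext ξ
    ring
  unfold Gf
  rw [hsub]
  ring

noncomputable def Phi (T r a₀ γ : ℝ) (hT : 0 ≤ T) (a₁ : ℝ → ℝ)
    (ha : MemLp a₁ 2 (volume.restrict (Icc (-r) 0)))
    (w : C(Icc (0:ℝ) T, ℝ)) : C(Icc (0:ℝ) T, ℝ) :=
  ⟨fun t => γ + ∫ s in (t : ℝ)..T, Gf T r a₀ a₁ (ext T hT w) s, by
    have hII : ∀ a b : ℝ, IntervalIntegrable (Gf T r a₀ a₁ (ext T hT w)) volume a b :=
      fun a b => Gf_II ha (ext_cont hT w) (ext_bound hT w) a b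
    have key : Continuous fun t : ℝ => γ + ∫ s in t..T, Gf T r a₀ a₁ (ext T hT w) s := by
      have h1 : Continuous fun t : ℝ => ∫ s in (0:ℝ)..t, Gf T r a₀ a₁ (ext T hT w) s :=
        intervalIntegral.continuous_primitive hII 0
      have h2 : ∀ t : ℝ, (∫ s in t..T, Gf T r a₀ a₁ (ext T hT w) s)
          = (∫ s in (0:ℝ)..T, Gf T r a₀ a₁ (ext T hT w) s)
            - ∫ s in (0:ℝ)..t, Gf T r a₀ a₁ (ext T hT w) s := by
        intro t
        rw [eq_sub_iff_add_eq, add_comm, integral_add_adjacent_intervals (hII 0 t) (hII t T)]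
      have h3 : (fun t : ℝ => γ + ∫ s in t..T, Gf T r a₀ a₁ (ext T hT w) s)
          = fun t : ℝ => γ + ((∫ s in (0:ℝ)..T, Gf T r a₀ a₁ (ext T hT w) s)
            - ∫ s in (0:ℝ)..t, Gf T r a₀ a₁ (ext T hT w) s) := funext fun t => by rw [h2 t]
      rw [h3]
      exact continuous_const.add (continuous_const.sub h1)
    exact key.comp continuous_subtype_val⟩

lemma Phi_apply (γ : ℝ) (hT : 0 ≤ T) (ha : MemLp a₁ 2 (volume.restrict (Icc (-r) 0)))
    (w : C(Icc (0:ℝ) T, ℝ)) (t : Icc (0:ℝ) T) :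
    Phi T r a₀ γ hT a₁ ha w t = γ + ∫ s in (t : ℝ)..T, Gf T r a₀ a₁ (ext T hT w) s := rfl

lemma key_step (γ : ℝ) (hT : 0 ≤ T) (ha : MemLp a₁ 2 (volume.restrict (Icc (-r) 0)))
    (x y : C(Icc (0:ℝ) T, ℝ)) {c : ℝ} (hc : 0 ≤ c) (n : ℕ)
    (hxy : ∀ u, u ∈ Icc (0:ℝ) T → |ext T hT x u - ext T hT y u| ≤ c * (T - u) ^ n / n !)
    (t : ℝ) (ht : t ∈ Icc (0:ℝ) T) :
    |Phi T r a₀ γ hT a₁ ha x ⟨t, ht⟩ - Phi T r a₀ γ hT a₁ ha y ⟨t, ht⟩|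
      ≤ Kc r a₀ a₁ * c * (T - t) ^ (n + 1) / (n + 1)! := by
  have hxc := ext_cont hT x
  have hyc := ext_cont hT y
  have hxb := ext_bound hT x
  have hyb := ext_bound hT y
  have hDc : Continuous fun u => ext T hT x u - ext T hT y u := hxc.sub hyc
  have hDb : ∀ u, |ext T hT x u - ext T hT y u| ≤ ‖x‖ + ‖y‖ := fun u =>
    (abs_sub _ _).trans (add_le_add (hxb u) (hyb u))
  have hfact : (0:ℝ) < n ! := by exact_mod_cast Nat.factorial_pos n
  -- pointwise bound on [t, T]
  have hpt : ∀ s ∈ Icc t T,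
      |Gf T r a₀ a₁ (ext T hT x) s - Gf T r a₀ a₁ (ext T hT y) s|
        ≤ Kc r a₀ a₁ * (c * (T - s) ^ n / n !) := by
    intro s hs
    have hs0 : (0:ℝ) ≤ s := le_trans ht.1 hs.1
    have hsT : s ≤ T := hs.2
    rw [Gf_sub ha hxc hyc hxb hyb s]
    have hB : 0 ≤ c * (T - s) ^ n / n ! := by
      have hp : (0:ℝ) ≤ (T - s) ^ n := pow_nonneg (by linarith) n
      exact div_nonneg (mul_nonneg hc hp) hfact.le
    refine Gf_abs_le ha hDc hDb hB ?_ ?_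
    · exact hxy s ⟨hs0, hsT⟩
    · intro u hsu huT
      refine (hxy u ⟨le_trans hs0 hsu, huT⟩).trans ?_
      have h1 : (T - u) ^ n ≤ (T - s) ^ n :=
        pow_le_pow_left₀ (by linarith) (by linarith) n
      have h2 : c * (T - u) ^ n ≤ c * (T - s) ^ n :=
        mul_le_mul_of_nonneg_left h1 hc
      exact div_le_div_of_nonneg_right h2 hfact.le
  -- integrability
  have hIx := Gf_II (T := T) (a₀ := a₀) ha hxc hxb t T
  have hIy := Gf_II (T := T) (a₀ := a₀) ha hyc hyb t T
  have hdiff : Phi T r a₀ γ hT a₁ ha x ⟨t, ht⟩ - Phi T r a₀ γ hT a₁ ha y ⟨t, ht⟩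
      = ∫ s in t..T, (Gf T r a₀ a₁ (ext T hT x) s - Gf T r a₀ a₁ (ext T hT y) s) := by
    rw [Phi_apply, Phi_apply, integral_sub hIx hIy]
    ring
  have htT : t ≤ T := ht.2
  have hbint : IntervalIntegrable (fun s => Kc r a₀ a₁ * (c * (T - s) ^ n / n !)) volume t T :=
    (Continuous.intervalIntegrable (by fun_prop) t T)
  have habs : |∫ s in t..T, (Gf T r a₀ a₁ (ext T hT x) s - Gf T r a₀ a₁ (ext T hT y) s)|
      ≤ ∫ s in t..T, Kc r a₀ a₁ * (c * (T - s) ^ n / n !) := by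
    refine (abs_integral_le_integral_abs htT).trans ?_
    refine integral_mono_on htT ((hIx.sub hIy).abs) hbint ?_
    exact hpt
  have hval : (∫ s in t..T, Kc r a₀ a₁ * (c * (T - s) ^ n / n !))
      = Kc r a₀ a₁ * c * (T - t) ^ (n + 1) / (n + 1)! := by
    have h1 : (∫ s in t..T, (T - s) ^ n) = (T - t) ^ (n + 1) / (n + 1) := by
      have := intervalIntegral.integral_comp_sub_left (a := t) (b := T)
        (fun u : ℝ => u ^ n) T
      rw [this, sub_self, integral_pow]
      norm_num
    have h2 : (fun s => Kc r a₀ a₁ * (c * (T - s) ^ n / n !))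
        = fun s => (Kc r a₀ a₁ * c / n !) * (T - s) ^ n := by
      funext s; ring
    rw [h2, intervalIntegral.integral_const_mul, h1]
    have hfs : ((n + 1)! : ℝ) = (n + 1) * n ! := by
      rw [Nat.factorial_succ]; push_cast; ring
    rw [hfs]
    have h4 : ((n:ℝ) + 1) ≠ 0 := by positivity
    have h5 : (n ! : ℝ) ≠ 0 := ne_of_gt hfact
    field_simp
    try ring
    try exact Or.inl trivial
  rw [hdiff]
  exact habs.trans_eq hval

lemma iter_est (γ : ℝ) (hT : 0 ≤ T) (ha : MemLp a₁ 2 (volume.restrict (Icc (-r) 0)))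
    (x y : C(Icc (0:ℝ) T, ℝ)) : ∀ n : ℕ, ∀ t, ∀ ht : t ∈ Icc (0:ℝ) T,
    |((Phi T r a₀ γ hT a₁ ha)^[n] x) ⟨t, ht⟩ - ((Phi T r a₀ γ hT a₁ ha)^[n] y) ⟨t, ht⟩|
      ≤ (Kc r a₀ a₁) ^ n * dist x y * (T - t) ^ n / n ! := by
  intro n
  induction n with
  | zero =>
      intro t ht
      simp only [Function.iterate_zero, id_eq, pow_zero, one_mul, mul_one, Nat.factorial_zero,
        Nat.cast_one, div_one]
      have := ContinuousMap.dist_apply_le_dist (f := x) (g := y) (⟨t, ht⟩ : Icc (0:ℝ) T)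
      rwa [Real.dist_eq] at this
  | succ n ih =>
      intro t ht
      have hc : 0 ≤ (Kc r a₀ a₁) ^ n * dist x y :=
        mul_nonneg (pow_nonneg Kc_nonneg n) dist_nonneg
      have hxy : ∀ u, u ∈ Icc (0:ℝ) T →
          |ext T hT ((Phi T r a₀ γ hT a₁ ha)^[n] x) u - ext T hT ((Phi T r a₀ γ hT a₁ ha)^[n] y) u|
            ≤ ((Kc r a₀ a₁) ^ n * dist x y) * (T - u) ^ n / n ! := by
        intro u hu
        rw [ext_of_mem hT _ hu, ext_of_mem hT _ hu]
        exact ih u hu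
      have := key_step (a₀ := a₀) γ hT ha ((Phi T r a₀ γ hT a₁ ha)^[n] x) ((Phi T r a₀ γ hT a₁ ha)^[n] y)
        hc n hxy t ht
      rw [← Function.iterate_succ_apply' (Phi T r a₀ γ hT a₁ ha) n x,
        ← Function.iterate_succ_apply' (Phi T r a₀ γ hT a₁ ha) n y] at this
      refine this.trans_eq ?_
      rw [pow_succ]
      ring

end BDEaux

open BDEaux

/-- Existence and uniqueness for the backward delay integro-differential equation:
there is a continuous function `w₀` on `[0,T]`, unique as a function on `[0,T]`, with
`w₀(t) = γ + ∫_t^T ( a₀·w₀(s) + ∫_{−r}^{0} a₁(ξ)·w₀(s−ξ)·𝟙_{s−ξ ≤ T} dξ ) ds`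
for every `t ∈ [0,T]`. -/
theorem backward_delay_equation_exists_unique (T r a₀ γ : ℝ) (hT : 0 < T) (hr : 0 < r)
    (a₁ : ℝ → ℝ) (ha : MemLp a₁ 2 (volume.restrict (Set.Icc (-r) 0))) :
    (∃ w₀ : ℝ → ℝ, ContinuousOn w₀ (Set.Icc 0 T) ∧ ∀ t ∈ Set.Icc (0 : ℝ) T,
        w₀ t = γ + ∫ s in t..T, (a₀ * w₀ s +
          ∫ ξ in Set.Icc (-r) 0, a₁ ξ * w₀ (s - ξ) * (if s - ξ ≤ T then (1 : ℝ) else 0))) ∧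
    ∀ w₀ w₀' : ℝ → ℝ, ContinuousOn w₀ (Set.Icc 0 T) → ContinuousOn w₀' (Set.Icc 0 T) →
      (∀ t ∈ Set.Icc (0 : ℝ) T,
        w₀ t = γ + ∫ s in t..T, (a₀ * w₀ s +
          ∫ ξ in Set.Icc (-r) 0, a₁ ξ * w₀ (s - ξ) * (if s - ξ ≤ T then (1 : ℝ) else 0))) →
      (∀ t ∈ Set.Icc (0 : ℝ) T,
        w₀' t = γ + ∫ s in t..T, (a₀ * w₀' s +
          ∫ ξ in Set.Icc (-r) 0, a₁ ξ * w₀' (s - ξ) * (if s - ξ ≤ T then (1 : ℝ) else 0))) →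
      ∀ t ∈ Set.Icc (0 : ℝ) T, w₀ t = w₀' t := by
  have hT' : (0:ℝ) ≤ T := hT.le
  haveI : CompactSpace (Icc (0:ℝ) T) := isCompact_iff_compactSpace.mp isCompact_Icc
  haveI : Nonempty (Icc (0:ℝ) T) := ⟨⟨0, le_refl 0, hT'⟩⟩
  set Φ := Phi T r a₀ γ hT' a₁ ha with hΦdef
  -- choose n with contraction constant < 1
  obtain ⟨n, hn⟩ : ∃ n : ℕ, (Kc r a₀ a₁ * T) ^ n / n ! < 1 := by
    have := FloorSemiring.tendsto_pow_div_factorial_atTop (K := ℝ) (Kc r a₀ a₁ * T)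
    have h := this.eventually (gt_mem_nhds one_pos)
    exact h.exists
  set q : ℝ := (Kc r a₀ a₁ * T) ^ n / n ! with hq
  have hq0 : 0 ≤ q := by
    have : 0 ≤ Kc r a₀ a₁ * T := mul_nonneg Kc_nonneg hT'
    positivity
  -- the iterate is Lipschitz with constant q
  have hlip : ∀ x y : C(Icc (0:ℝ) T, ℝ), dist (Φ^[n] x) (Φ^[n] y) ≤ q * dist x y := by
    intro x y
    rw [ContinuousMap.dist_le (mul_nonneg hq0 dist_nonneg)]
    rintro ⟨t, ht⟩
    rw [Real.dist_eq]
    have h1 := iter_est (a₀ := a₀) γ hT' ha x y n t ht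
    refine h1.trans ?_
    have hfact : (0:ℝ) < n ! := by exact_mod_cast Nat.factorial_pos n
    have h2 : (T - t) ^ n ≤ T ^ n := pow_le_pow_left₀ (by linarith [ht.1, ht.2]) (by linarith [ht.1]) n
    have h3 : Kc r a₀ a₁ ^ n * dist x y * (T - t) ^ n ≤ Kc r a₀ a₁ ^ n * T ^ n * dist x y := by
      have hnn : 0 ≤ Kc r a₀ a₁ ^ n * dist x y :=
        mul_nonneg (pow_nonneg (Kc_nonneg (r := r) (a₀ := a₀) (a₁ := a₁)) n) dist_nonneg
      calc Kc r a₀ a₁ ^ n * dist x y * (T - t) ^ n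
          ≤ Kc r a₀ a₁ ^ n * dist x y * T ^ n := mul_le_mul_of_nonneg_left h2 hnn
        _ = Kc r a₀ a₁ ^ n * T ^ n * dist x y := by ring
    calc Kc r a₀ a₁ ^ n * dist x y * (T - t) ^ n / n !
        ≤ Kc r a₀ a₁ ^ n * T ^ n * dist x y / n ! := by
          exact div_le_div_of_nonneg_right h3 hfact.le
      _ = q * dist x y := by rw [hq, mul_pow]; ring
  have hcontr : ContractingWith q.toNNReal (Φ^[n]) := by
    constructor
    · have : ((q.toNNReal : ℝ)) < ((1 : ℝ≥0) : ℝ) := by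
        rw [Real.coe_toNNReal q hq0]; exact_mod_cast hn
      exact_mod_cast this
    · refine LipschitzWith.of_dist_le_mul fun x y => ?_
      rw [Real.coe_toNNReal q hq0]
      exact hlip x y
  -- fixed point of Φ
  obtain ⟨x, hx⟩ : ∃ x : C(Icc (0:ℝ) T, ℝ), Φ x = x :=
    ⟨_, ContractingWith.isFixedPt_fixedPoint_iterate hcontr⟩
  -- uniqueness of fixed points of Φ
  have huniq : ∀ z z' : C(Icc (0:ℝ) T, ℝ), Φ z = z → Φ z' = z' → z = z' := by
    intro z z' hz hz'
    exact hcontr.fixedPoint_unique'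
      (Function.IsFixedPt.iterate hz n) (Function.IsFixedPt.iterate hz' n)
  -- any solution of the integral equation restricts to a fixed point of Φ
  have hsol_fixed : ∀ w₀ : ℝ → ℝ, ContinuousOn w₀ (Icc 0 T) →
      (∀ t ∈ Icc (0 : ℝ) T,
        w₀ t = γ + ∫ s in t..T, (a₀ * w₀ s +
          ∫ ξ in Icc (-r) 0, a₁ ξ * w₀ (s - ξ) * (if s - ξ ≤ T then (1 : ℝ) else 0))) →
      ∀ z : C(Icc (0:ℝ) T, ℝ), (∀ p : Icc (0:ℝ) T, z p = w₀ p) → Φ z = z := by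
    intro w₀ hw₀c hw₀ z hzw
    ext p
    obtain ⟨t, ht⟩ := p
    have hext : ∀ u (hu : u ∈ Icc (0:ℝ) T), ext T hT' z u = w₀ u := by
      intro u hu
      rw [ext_of_mem hT' z hu, hzw]
    have hcongr : (∫ s in t..T, Gf T r a₀ a₁ (ext T hT' z) s)
        = ∫ s in t..T, (a₀ * w₀ s +
            ∫ ξ in Icc (-r) 0, a₁ ξ * w₀ (s - ξ) * (if s - ξ ≤ T then (1 : ℝ) else 0)) := by
      refine intervalIntegral.integral_congr fun s hs => ?_
      rw [uIcc_of_le ht.2] at hs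
      have hs0 : (0:ℝ) ≤ s := le_trans ht.1 hs.1
      have hsT : s ≤ T := hs.2
      have hinner : (∫ ξ in Icc (-r) 0, a₁ ξ * ext T hT' z (s - ξ) * (if s - ξ ≤ T then (1:ℝ) else 0))
          = ∫ ξ in Icc (-r) 0, a₁ ξ * w₀ (s - ξ) * (if s - ξ ≤ T then (1:ℝ) else 0) := by
        refine setIntegral_congr_fun measurableSet_Icc fun ξ hξ => ?_
        by_cases h : s - ξ ≤ T
        · have hmem : s - ξ ∈ Icc (0:ℝ) T := ⟨by linarith [hξ.2], h⟩
          rw [hext _ hmem]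
        · simp [h]
      rw [Gf, hext s ⟨hs0, hsT⟩, hinner]
    have := hw₀ t ht
    rw [Phi_apply, hcongr, ← this, hzw ⟨t, ht⟩]
  constructor
  · -- existence
    refine ⟨ext T hT' x, (ext_cont hT' x).continuousOn, ?_⟩
    intro t ht
    have h1 : ext T hT' x t = x ⟨t, ht⟩ := ext_of_mem hT' x ht
    have h2 : Φ x ⟨t, ht⟩ = γ + ∫ s in t..T, Gf T r a₀ a₁ (ext T hT' x) s :=
      Phi_apply γ hT' ha x ⟨t, ht⟩
    have h3 : x ⟨t, ht⟩ = Φ x ⟨t, ht⟩ := by rw [hx]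
    rw [h1, h3, h2]
    rfl
  · -- uniqueness
    intro w₀ w₀' hc hc' hs hs' t ht
    set z : C(Icc (0:ℝ) T, ℝ) := ⟨fun p => w₀ p, by
      exact hc.restrict.congr fun p => rfl⟩ with hzdef
    set z' : C(Icc (0:ℝ) T, ℝ) := ⟨fun p => w₀' p, by
      exact hc'.restrict.congr fun p => rfl⟩ with hz'def
    have hz : Φ z = z := hsol_fixed w₀ hc hs z fun p => rfl
    have hz' : Φ z' = z' := hsol_fixed w₀' hc' hs' z' fun p => rfl
    have := huniq z z' hz hz'
    have h1 : z ⟨t, ht⟩ = z' ⟨t, ht⟩ := by rw [this]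
    exact h1
end

section
/- The affine function v(t,x) = ⟨w(t),x⟩ + c(t) is an integral solution of the HJB equation for the linear-quadratic example: let T > 0, r > 0, a₀, b₀, γ ∈ ℝ, β > 0, a₁, b₁ ∈ L²([−r,0];ℝ). Let w₀ : [0,T] → ℝ be continuous with w₀(t) = γ + ∫_t^T ( a₀w₀(s) + ∫_{−r}^{0} a₁(ξ)w₀(s−ξ)𝟙_{{s−ξ≤T}} dξ ) ds for all t, set w₁(t,ξ) = w₀(t−ξ)·𝟙_{{t−ξ ∈ [0,T]}}, b(s) = b₀w₀(s) + ∫_{−r}^0 b₁(ξ)w₁(s,ξ)dξ, and c(t) = ∫_t^T (max(b(s),0))²/(4β) ds. Then for every t ∈ [0,T], every x₀ ∈ ℝ and every g ∈ L²([−r,0];ℝ), setting x₁(ξ) = ∫_{−r}^{ξ} g(ζ)dζ, the following identity holds: γ·x₀ − ( w₀(t)·x₀ + ∫_{−r}^0 w₁(t,ξ)·x₁(ξ)dξ + c(t) ) + ∫_t^T [ (a₀x₀ + x₁(0))·w₀(s) + ∫_{−r}^0 (a₁(ξ)x₀ − g(ξ))·w₁(s,ξ)dξ + (max(b(s),0))²/(4β)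 ] ds = 0. -/
open MeasureTheory Set intervalIntegral

namespace HJBAux

/-- Product integrability of `(s,ζ) ↦ h ζ * K (s,ζ)` for bounded measurable `K`
and integrable `h`. -/
lemma prodInt {μ ν : Measure ℝ} [IsFiniteMeasure μ] [IsFiniteMeasure ν]
    {K : ℝ × ℝ → ℝ} (hK : Measurable K) {C : ℝ} (hC : ∀ p, |K p| ≤ C)
    {h : ℝ → ℝ} (hh : Integrable h ν) :
    Integrable (fun p : ℝ × ℝ => h p.2 * K p) (μ.prod ν) := by
  refine Integrable.mono' ((integrable_const C).mul_prod hh.abs) ?_ ?_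
  · exact (hh.aestronglyMeasurable.comp_snd).mul hK.aestronglyMeasurable
  · refine Filter.Eventually.of_forall fun p => ?_
    rw [Real.norm_eq_abs, abs_mul]
    calc |h p.2| * |K p| ≤ |h p.2| * C :=
          mul_le_mul_of_nonneg_left (hC p) (abs_nonneg _)
      _ = C * |h p.2| := mul_comm _ _

lemma paramInt {μ ν : Measure ℝ} [IsFiniteMeasure μ] [IsFiniteMeasure ν]
    {K : ℝ × ℝ → ℝ} (hK : Measurable K) {C : ℝ} (hC : ∀ p, |K p| ≤ C)
    {h : ℝ → ℝ} (hh : Integrable h ν) :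
    Integrable (fun s => ∫ ζ, h ζ * K (s, ζ) ∂ν) μ :=
  (prodInt hK hC hh).integral_prod_left

lemma keyIdentity {T t ζ : ℝ} (htT : t ≤ T) (hζ : ζ ≤ 0) {W : ℝ → ℝ}
    (hWi : Integrable W (volume : Measure ℝ)) (hW0 : ∀ u, T < u → W u = 0) :
    (∫ s in t..T, W s) - ∫ s in (t - ζ)..(T - ζ), W s = ∫ s in t..(t - ζ), W s := by
  have hii : ∀ a b : ℝ, IntervalIntegrable W volume a b := fun a b => hWi.intervalIntegrable
  have h1 : (∫ s in T..(T - ζ), W s) = 0 := by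
    rw [intervalIntegral.integral_of_le (by linarith)]
    exact setIntegral_eq_zero_of_forall_eq_zero fun u hu => hW0 u hu.1
  have h2 := intervalIntegral.integral_add_adjacent_intervals (hii t T) (hii T (T - ζ))
  have h3 := intervalIntegral.integral_add_adjacent_intervals (hii t (t - ζ)) (hii (t - ζ) (T - ζ))
  linarith

/-- The Fubini-type identity (L3). -/
lemma L3 {T t r : ℝ} (htT : t ≤ T) {W g : ℝ → ℝ} (hWm : Measurable W)
    (hWi : Integrable W (volume : Measure ℝ)) {M : ℝ} (hM : ∀ u, |W u| ≤ M)
    (hW0 : ∀ u, T < u → W u = 0)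
    (hg : IntegrableOn g (Icc (-r) 0)) :
    (∫ s in t..T, ((∫ ζ in Icc (-r) 0, g ζ) * W s - ∫ ζ in Icc (-r) 0, g ζ * W (s - ζ)))
      = ∫ ξ in Icc (-r) 0, W (t - ξ) * ∫ ζ in Icc (-r) ξ, g ζ := by
  have hgW : ∀ s : ℝ, IntegrableOn (fun ζ => g ζ * W (s - ζ)) (Icc (-r) 0) := by
    intro s
    have h1 : Integrable (fun ζ => W (s - ζ) * g ζ) (volume.restrict (Icc (-r) 0)) :=
      hg.bdd_mul ((hWm.comp (measurable_const.sub measurable_id)).aestronglyMeasurable)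
        (Filter.Eventually.of_forall fun ζ => by rw [Real.norm_eq_abs]; exact hM _)
    exact h1.congr (Filter.Eventually.of_forall fun ζ => mul_comm _ _)
  have hWt : ∀ ζ : ℝ, IntegrableOn (fun s => W (s - ζ)) (Ioc t T) := by
    intro ζ
    refine Integrable.mono' (integrable_const M)
      ((hWm.comp (measurable_id.sub measurable_const)).aestronglyMeasurable)
      (Filter.Eventually.of_forall fun s => ?_)
    rw [Real.norm_eq_abs]; exact hM _
  -- LHS chain
  have lhs1 : (∫ s in t..T, ((∫ ζ in Icc (-r) 0, g ζ) * W s - ∫ ζ in Icc (-r) 0, g ζ * W (s - ζ)))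
      = ∫ s in Ioc t T, ∫ ζ in Icc (-r) 0, g ζ * (W s - W (s - ζ)) := by
    rw [intervalIntegral.integral_of_le htT]
    refine setIntegral_congr_fun measurableSet_Ioc fun s hs => ?_
    rw [← MeasureTheory.integral_mul_const, ← integral_sub (hg.mul_const _) (hgW s)]
    simp only [mul_sub]
  have lhs2 : (∫ s in Ioc t T, ∫ ζ in Icc (-r) 0, g ζ * (W s - W (s - ζ)))
      = ∫ ζ in Icc (-r) 0, ∫ s in Ioc t T, g ζ * (W s - W (s - ζ)) := by
    apply MeasureTheory.integral_integral_swap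
    exact prodInt ((hWm.comp measurable_fst).sub (hWm.comp (measurable_fst.sub measurable_snd)))
      (C := M + M) (fun p => (abs_sub _ _).trans (add_le_add (hM _) (hM _))) hg
  have lhs3 : (∫ ζ in Icc (-r) 0, ∫ s in Ioc t T, g ζ * (W s - W (s - ζ)))
      = ∫ ζ in Icc (-r) 0, g ζ * ∫ s in t..(t - ζ), W s := by
    refine setIntegral_congr_fun measurableSet_Icc fun ζ hζ => ?_
    rw [MeasureTheory.integral_const_mul, integral_sub (hWi.integrableOn) (hWt ζ)]
    congr 1
    have e1 : (∫ s in Ioc t T, W s) = ∫ s in t..T, W s :=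
      (intervalIntegral.integral_of_le htT).symm
    have e2 : (∫ s in Ioc t T, W (s - ζ)) = ∫ s in (t - ζ)..(T - ζ), W s := by
      rw [← intervalIntegral.integral_of_le htT, intervalIntegral.integral_comp_sub_right W ζ]
    rw [e1, e2]
    exact keyIdentity htT hζ.2 hWi hW0
  -- RHS chain
  set S : Set (ℝ × ℝ) := {q : ℝ × ℝ | -r ≤ q.2 ∧ q.2 ≤ q.1} with hSdef
  have hS : MeasurableSet S :=
    (measurableSet_le measurable_const measurable_snd).inter
      (measurableSet_le measurable_snd measurable_fst)
  set K2 : ℝ × ℝ → ℝ := fun p => S.indicator (fun _ => (1:ℝ)) p * W (t - p.1) with hK2def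
  have hK2m : Measurable K2 :=
    (measurable_const.indicator hS).mul (hWm.comp (measurable_const.sub measurable_fst))
  have hM0 : 0 ≤ M := (abs_nonneg _).trans (hM 0)
  have hK2b : ∀ p, |K2 p| ≤ M := by
    intro p
    by_cases hp : p ∈ S
    · rw [hK2def]; simp only [Set.indicator_of_mem hp, one_mul]; exact hM _
    · rw [hK2def]; simp only [Set.indicator_of_notMem hp, zero_mul, abs_zero]; exact hM0
  have rhs1 : (∫ ξ in Icc (-r) 0, W (t - ξ) * ∫ ζ in Icc (-r) ξ, g ζ)
      = ∫ ξ in Icc (-r) 0, ∫ ζ in Icc (-r) 0, g ζ * K2 (ξ, ζ) := by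
    refine setIntegral_congr_fun measurableSet_Icc fun ξ hξ => ?_
    have hset : Icc (-r) 0 ∩ Icc (-r) ξ = Icc (-r) ξ := by
      rw [Icc_inter_Icc, max_self, min_eq_right hξ.2]
    have e1 : (∫ ζ in Icc (-r) ξ, g ζ) = ∫ ζ in Icc (-r) 0, (Icc (-r) ξ).indicator g ζ := by
      rw [setIntegral_indicator measurableSet_Icc, hset]
    rw [e1, ← MeasureTheory.integral_const_mul]
    refine setIntegral_congr_fun measurableSet_Icc fun ζ _ => ?_
    rw [hK2def]
    simp only [Set.indicator_apply, hSdef, mem_setOf_eq, mem_Icc]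
    split_ifs with h1 h2 h2 <;> ring
  have rhs2 : (∫ ξ in Icc (-r) 0, ∫ ζ in Icc (-r) 0, g ζ * K2 (ξ, ζ))
      = ∫ ζ in Icc (-r) 0, ∫ ξ in Icc (-r) 0, g ζ * K2 (ξ, ζ) := by
    apply MeasureTheory.integral_integral_swap
    exact prodInt hK2m hK2b hg
  have rhs3 : (∫ ζ in Icc (-r) 0, ∫ ξ in Icc (-r) 0, g ζ * K2 (ξ, ζ))
      = ∫ ζ in Icc (-r) 0, g ζ * ∫ s in t..(t - ζ), W s := by
    refine setIntegral_congr_fun measurableSet_Icc fun ζ hζ => ?_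
    rw [MeasureTheory.integral_const_mul]
    congr 1
    have e1 : ∀ ξ : ℝ, K2 (ξ, ζ) = (Ici ζ).indicator (fun ξ => W (t - ξ)) ξ := by
      intro ξ
      rw [hK2def]
      simp only [Set.indicator_apply, hSdef, mem_setOf_eq, mem_Ici]
      by_cases h : ζ ≤ ξ
      · simp [h, hζ.1]
      · simp [h]
    have hset : Icc (-r) 0 ∩ Ici ζ = Icc ζ 0 := by
      ext u
      simp only [mem_inter_iff, mem_Icc, mem_Ici]
      constructor
      · rintro ⟨⟨_, h2⟩, h3⟩; exact ⟨h3, h2⟩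
      · rintro ⟨h1, h2⟩; exact ⟨⟨hζ.1.trans h1, h2⟩, h1⟩
    calc (∫ ξ in Icc (-r) 0, K2 (ξ, ζ))
        = ∫ ξ in Icc (-r) 0, (Ici ζ).indicator (fun ξ => W (t - ξ)) ξ :=
          setIntegral_congr_fun measurableSet_Icc fun ξ _ => e1 ξ
      _ = ∫ ξ in Icc ζ 0, W (t - ξ) := by
          rw [setIntegral_indicator measurableSet_Ici, hset]
      _ = ∫ ξ in ζ..0, W (t - ξ) := by
          rw [intervalIntegral.integral_of_le hζ.2, integral_Icc_eq_integral_Ioc]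
      _ = ∫ s in t..(t - ζ), W s := by
          rw [intervalIntegral.integral_comp_sub_left W t, sub_zero]
  rw [lhs1, lhs2, lhs3, rhs1, rhs2, rhs3]

end HJBAux

open HJBAux in
/-- The affine function `v(t,x) = ⟨w(t),x⟩ + c(t)` is an integral solution of the HJB
equation for the linear-quadratic advertising example: with `w₀` solving the backward
delay equation with terminal value `γ`, `w₁(t,ξ) = w₀(t−ξ)·𝟙_{[0,T]}(t−ξ)`,
`b(s) = b₀w₀(s) + ∫_{−r}^0 b₁(ξ)w₁(s,ξ)dξ`, `c(t) = ∫_t^T (max(b(s),0))²/(4β) ds`,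
and `x = (x₀, x₁)` with `x₁(ξ) = ∫_{−r}^ξ g` (so `x ∈ D(A)`), one has
`φ(x) − v(t,x) + ∫_t^T [⟨Ax, v_x(s,x)⟩ + H₀(v_x(s,x))] ds = 0`. -/
theorem affine_integral_solution_of_HJB (T r a₀ b₀ γ β : ℝ)
    (hT : 0 < T) (hr : 0 < r) (hβ : 0 < β) (a₁ b₁ : ℝ → ℝ)
    (ha₁ : MemLp a₁ 2 (volume.restrict (Set.Icc (-r) 0)))
    (hb₁ : MemLp b₁ 2 (volume.restrict (Set.Icc (-r) 0)))
    (w₀ : ℝ → ℝ) (hw₀c : ContinuousOn w₀ (Set.Icc 0 T))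
    (hw₀ : ∀ t ∈ Set.Icc (0 : ℝ) T,
      w₀ t = γ + ∫ s in t..T, (a₀ * w₀ s +
        ∫ ξ in Set.Icc (-r) 0, a₁ ξ * w₀ (s - ξ) * (if s - ξ ≤ T then (1 : ℝ) else 0)))
    (w₁ : ℝ → ℝ → ℝ)
    (hw₁ : ∀ t ξ, w₁ t ξ = w₀ (t - ξ) * (if t - ξ ∈ Set.Icc 0 T then (1 : ℝ) else 0))
    (b : ℝ → ℝ)
    (hb : ∀ s, b s = b₀ * w₀ s + ∫ ξ in Set.Icc (-r) 0, b₁ ξ * w₁ s ξ)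
    (c : ℝ → ℝ)
    (hc : ∀ t, c t = ∫ s in t..T, (max (b s) 0) ^ 2 / (4 * β))
    (t : ℝ) (ht : t ∈ Set.Icc (0 : ℝ) T) (x₀ : ℝ) (g : ℝ → ℝ)
    (hg : MemLp g 2 (volume.restrict (Set.Icc (-r) 0)))
    (x₁ : ℝ → ℝ) (hx₁ : ∀ ξ, x₁ ξ = ∫ ζ in Set.Icc (-r) ξ, g ζ) :
    γ * x₀ - (w₀ t * x₀ + (∫ ξ in Set.Icc (-r) 0, w₁ t ξ * x₁ ξ) + c t) +
      ∫ s in t..T, ((a₀ * x₀ + x₁ 0) * w₀ s +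
        (∫ ξ in Set.Icc (-r) 0, (a₁ ξ * x₀ - g ξ) * w₁ s ξ) +
        (max (b s) 0) ^ 2 / (4 * β)) = 0 := by
  obtain ⟨h0t, htT⟩ := ht
  -- the clamped extension of w₀ and its truncation W
  set wb : ℝ → ℝ := fun u => w₀ (min (max u 0) T) with hwbdef
  have hwbc : Continuous wb := by
    refine hw₀c.comp_continuous
      ((continuous_id.max continuous_const).min continuous_const) fun u => ?_
    exact ⟨le_min (le_max_right _ _) hT.le, min_le_right _ _⟩
  set W : ℝ → ℝ := (Set.Icc (0:ℝ) T).indicator wb with hWdef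
  have hWeq : ∀ u ∈ Set.Icc (0:ℝ) T, W u = w₀ u := by
    intro u hu
    rw [hWdef, Set.indicator_of_mem hu, hwbdef]
    simp only [max_eq_left hu.1, min_eq_left hu.2]
  have hW0 : ∀ u, T < u → W u = 0 := fun u hu =>
    Set.indicator_of_notMem (fun h => absurd h.2 (not_le.mpr hu)) _
  have hWm : Measurable W := (hwbc.measurable).indicator measurableSet_Icc
  have hWi : Integrable W (volume : Measure ℝ) :=
    ((hwbc.continuousOn.integrableOn_compact isCompact_Icc)).integrable_indicator
      measurableSet_Icc
  obtain ⟨M₀, hM₀⟩ := isCompact_Icc.exists_bound_of_continuousOn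
    (hwbc.continuousOn (s := Set.Icc (0:ℝ) T))
  set M := max M₀ 0 with hMdef
  have hM : ∀ u, |W u| ≤ M := by
    intro u
    by_cases hu : u ∈ Set.Icc (0:ℝ) T
    · rw [hWdef, Set.indicator_of_mem hu]
      exact le_max_of_le_left (hM₀ u hu)
    · rw [hWdef, Set.indicator_of_notMem hu, abs_zero]; exact le_max_right _ _
  have hw₁W : ∀ s ξ, w₁ s ξ = W (s - ξ) := by
    intro s ξ
    rw [hw₁ s ξ]
    by_cases h : s - ξ ∈ Set.Icc (0:ℝ) T
    · rw [if_pos h, mul_one, hWeq _ h]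
    · rw [if_neg h, mul_zero, hWdef, Set.indicator_of_notMem h]
  -- integrability of the data
  have hgi : IntegrableOn g (Set.Icc (-r) 0) := hg.integrable one_le_two
  have ha₁i : IntegrableOn a₁ (Set.Icc (-r) 0) := ha₁.integrable one_le_two
  have hb₁i : IntegrableOn b₁ (Set.Icc (-r) 0) := hb₁.integrable one_le_two
  -- translated-W kernel
  have hK0m : Measurable (fun p : ℝ × ℝ => W (p.1 - p.2)) :=
    hWm.comp (measurable_fst.sub measurable_snd)
  have hK0b : ∀ p : ℝ × ℝ, |W (p.1 - p.2)| ≤ M := fun p => hM _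
  have hhW : ∀ (h : ℝ → ℝ), IntegrableOn h (Set.Icc (-r) 0) → ∀ s : ℝ,
      IntegrableOn (fun ζ => h ζ * W (s - ζ)) (Set.Icc (-r) 0) := by
    intro h hh s
    have h1 : Integrable (fun ζ => W (s - ζ) * h ζ) (volume.restrict (Set.Icc (-r) 0)) :=
      hh.bdd_mul ((hWm.comp (measurable_const.sub measurable_id)).aestronglyMeasurable)
        (Filter.Eventually.of_forall fun ζ => by rw [Real.norm_eq_abs]; exact hM _)
    exact h1.congr (Filter.Eventually.of_forall fun ζ => mul_comm _ _)
  -- parameter integrals are interval integrable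
  have hparam : ∀ (h : ℝ → ℝ), IntegrableOn h (Set.Icc (-r) 0) →
      IntervalIntegrable (fun s => ∫ ζ in Set.Icc (-r) 0, h ζ * W (s - ζ)) volume t T := by
    intro h hh
    refine (intervalIntegrable_iff_integrableOn_Ioc_of_le htT).mpr ?_
    exact paramInt (μ := volume.restrict (Set.Ioc t T)) hK0m hK0b hh
  have hw₀IntOn : IntervalIntegrable w₀ volume t T := by
    apply ContinuousOn.intervalIntegrable
    rw [uIcc_of_le htT]
    exact hw₀c.mono (Set.Icc_subset_Icc h0t le_rfl)
  -- integrability of the Hamiltonian term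
  have hbB : ∀ s ∈ Set.Ioc t T,
      b s = b₀ * W s + ∫ ζ in Set.Icc (-r) 0, b₁ ζ * W (s - ζ) := by
    intro s hs
    rw [hb s, hWeq s ⟨by linarith [hs.1], hs.2⟩]
    simp only [hw₁W]
  have hbm : AEStronglyMeasurable b (volume.restrict (Set.Ioc t T)) := by
    have hBm : AEStronglyMeasurable
        (fun s => b₀ * W s + ∫ ζ in Set.Icc (-r) 0, b₁ ζ * W (s - ζ))
        (volume.restrict (Set.Ioc t T)) :=
      ((measurable_const.mul hWm).aestronglyMeasurable).add
        (paramInt (μ := volume.restrict (Set.Ioc t T)) hK0m hK0b hb₁i).aestronglyMeasurable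
    refine hBm.congr ?_
    exact (ae_restrict_iff' measurableSet_Ioc).2
      (Filter.Eventually.of_forall fun s hs => (hbB s hs).symm)
  set Cb : ℝ := |b₀| * M + M * ∫ ζ in Set.Icc (-r) 0, |b₁ ζ| with hCbdef
  have hbbound : ∀ s ∈ Set.Ioc t T, |b s| ≤ Cb := by
    intro s hs
    rw [hbB s hs]
    have h1 : |∫ ζ in Set.Icc (-r) 0, b₁ ζ * W (s - ζ)|
        ≤ M * ∫ ζ in Set.Icc (-r) 0, |b₁ ζ| := by
      calc |∫ ζ in Set.Icc (-r) 0, b₁ ζ * W (s - ζ)|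
          ≤ ∫ ζ in Set.Icc (-r) 0, |b₁ ζ| * |W (s - ζ)| := by
            simpa [Real.norm_eq_abs, abs_mul] using
              norm_integral_le_integral_norm (μ := volume.restrict (Set.Icc (-r) 0))
                (fun ζ => b₁ ζ * W (s - ζ))
        _ ≤ ∫ ζ in Set.Icc (-r) 0, |b₁ ζ| * M := by
            refine integral_mono
              ((hhW b₁ hb₁i s).abs.congr
                (Filter.Eventually.of_forall fun ζ => abs_mul _ _))
              (hb₁i.abs.mul_const M) fun ζ => ?_
            exact mul_le_mul_of_nonneg_left (hM _) (abs_nonneg _)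
        _ = M * ∫ ζ in Set.Icc (-r) 0, |b₁ ζ| := by
            rw [MeasureTheory.integral_mul_const, mul_comm]
    calc |b₀ * W s + ∫ ζ in Set.Icc (-r) 0, b₁ ζ * W (s - ζ)|
        ≤ |b₀ * W s| + |∫ ζ in Set.Icc (-r) 0, b₁ ζ * W (s - ζ)| := abs_add_le _ _
      _ ≤ |b₀| * M + M * ∫ ζ in Set.Icc (-r) 0, |b₁ ζ| := by
          refine add_le_add ?_ h1
          rw [abs_mul]
          exact mul_le_mul_of_nonneg_left (hM _) (abs_nonneg _)
  have hf3 : IntervalIntegrable (fun s => max (b s) 0 ^ 2 / (4 * β)) volume t T := by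
    refine (intervalIntegrable_iff_integrableOn_Ioc_of_le htT).mpr ?_
    refine Integrable.mono' (integrable_const (Cb ^ 2 / (4 * β)))
      (Continuous.comp_aestronglyMeasurable (g := fun x : ℝ => max x 0 ^ 2 / (4 * β))
        (by fun_prop) hbm) ?_
    refine (ae_restrict_iff' measurableSet_Ioc).2 (Filter.Eventually.of_forall fun s hs => ?_)
    have h0 : (0:ℝ) ≤ max (b s) 0 := le_max_right _ _
    have h1 : max (b s) 0 ≤ Cb :=
      max_le ((le_abs_self _).trans (hbbound s hs)) ((abs_nonneg _).trans (hbbound s hs))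
    rw [Real.norm_eq_abs, abs_of_nonneg (by positivity)]
    gcongr
  -- rewrite via W
  simp only [hw₁W, hx₁]
  -- pointwise reorganisation of the integrand
  have hptwise : ∀ s : ℝ,
      (a₀ * x₀ + ∫ ζ in Set.Icc (-r) 0, g ζ) * w₀ s +
        (∫ ξ in Set.Icc (-r) 0, (a₁ ξ * x₀ - g ξ) * W (s - ξ)) +
        max (b s) 0 ^ 2 / (4 * β)
      = x₀ * (a₀ * w₀ s + ∫ ζ in Set.Icc (-r) 0, a₁ ζ * W (s - ζ)) +
        ((∫ ζ in Set.Icc (-r) 0, g ζ) * w₀ s - ∫ ζ in Set.Icc (-r) 0, g ζ * W (s - ζ)) +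
        max (b s) 0 ^ 2 / (4 * β) := by
    intro s
    have e1 : (∫ ξ in Set.Icc (-r) 0, (a₁ ξ * x₀ - g ξ) * W (s - ξ))
        = x₀ * (∫ ζ in Set.Icc (-r) 0, a₁ ζ * W (s - ζ))
          - ∫ ζ in Set.Icc (-r) 0, g ζ * W (s - ζ) := by
      rw [← MeasureTheory.integral_const_mul, ← integral_sub ((hhW a₁ ha₁i s).const_mul x₀) (hhW g hgi s)]
      exact setIntegral_congr_fun measurableSet_Icc fun ξ _ => by ring
    rw [e1]; ring
  have hPint : IntervalIntegrable
      (fun s => a₀ * w₀ s + ∫ ζ in Set.Icc (-r) 0, a₁ ζ * W (s - ζ)) volume t T :=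
    (hw₀IntOn.const_mul a₀).add (hparam a₁ ha₁i)
  have hQint : IntervalIntegrable
      (fun s => (∫ ζ in Set.Icc (-r) 0, g ζ) * w₀ s - ∫ ζ in Set.Icc (-r) 0, g ζ * W (s - ζ))
      volume t T :=
    (hw₀IntOn.const_mul _).sub (hparam g hgi)
  have hPval : (∫ s in t..T, (a₀ * w₀ s + ∫ ζ in Set.Icc (-r) 0, a₁ ζ * W (s - ζ)))
      = w₀ t - γ := by
    have h := hw₀ t ⟨h0t, htT⟩
    have hcg : (∫ s in t..T, (a₀ * w₀ s +
          ∫ ξ in Set.Icc (-r) 0, a₁ ξ * w₀ (s - ξ) * (if s - ξ ≤ T then (1:ℝ) else 0)))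
        = ∫ s in t..T, (a₀ * w₀ s + ∫ ζ in Set.Icc (-r) 0, a₁ ζ * W (s - ζ)) := by
      refine intervalIntegral.integral_congr fun s hs => ?_
      rw [uIcc_of_le htT] at hs
      congr 1
      refine setIntegral_congr_fun measurableSet_Icc fun ξ hξ => ?_
      by_cases hsT : s - ξ ≤ T
      · rw [if_pos hsT, mul_one, hWeq _ ⟨by linarith [hs.1, hξ.2], hsT⟩]
      · rw [if_neg hsT, mul_zero, hW0 _ (lt_of_not_ge hsT), mul_zero]
    linarith [h, hcg]
  have hQval : (∫ s in t..T,
        ((∫ ζ in Set.Icc (-r) 0, g ζ) * w₀ s - ∫ ζ in Set.Icc (-r) 0, g ζ * W (s - ζ)))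
      = ∫ ξ in Set.Icc (-r) 0, W (t - ξ) * ∫ ζ in Set.Icc (-r) ξ, g ζ := by
    have hcg : (∫ s in t..T,
          ((∫ ζ in Set.Icc (-r) 0, g ζ) * w₀ s - ∫ ζ in Set.Icc (-r) 0, g ζ * W (s - ζ)))
        = ∫ s in t..T,
          ((∫ ζ in Set.Icc (-r) 0, g ζ) * W s - ∫ ζ in Set.Icc (-r) 0, g ζ * W (s - ζ)) := by
      refine intervalIntegral.integral_congr fun s hs => ?_
      rw [uIcc_of_le htT] at hs
      rw [hWeq s ⟨by linarith [hs.1], hs.2⟩]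
    exact hcg.trans (L3 htT hWm hWi hM hW0 hgi)
  have step1 : (∫ s in t..T, ((a₀ * x₀ + ∫ ζ in Set.Icc (-r) 0, g ζ) * w₀ s +
        (∫ ξ in Set.Icc (-r) 0, (a₁ ξ * x₀ - g ξ) * W (s - ξ)) +
        max (b s) 0 ^ 2 / (4 * β)))
      = x₀ * (w₀ t - γ) +
        (∫ ξ in Set.Icc (-r) 0, W (t - ξ) * ∫ ζ in Set.Icc (-r) ξ, g ζ) + c t := by
    rw [intervalIntegral.integral_congr (g := fun s =>
      x₀ * (a₀ * w₀ s + ∫ ζ in Set.Icc (-r) 0, a₁ ζ * W (s - ζ)) +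
        ((∫ ζ in Set.Icc (-r) 0, g ζ) * w₀ s - ∫ ζ in Set.Icc (-r) 0, g ζ * W (s - ζ)) +
        max (b s) 0 ^ 2 / (4 * β)) (fun s _ => hptwise s)]
    rw [intervalIntegral.integral_add ((hPint.const_mul x₀).add hQint) hf3,
      intervalIntegral.integral_add (hPint.const_mul x₀) hQint,
      intervalIntegral.integral_const_mul, hPval, hQval, ← hc]
  rw [step1]
  ring
end

section
/- Duality between A and A*: let r > 0, a₀ ∈ ℝ, a₁ ∈ L²([−r,0];ℝ). Let x = (x₀,x₁) with x₁(ξ) = ∫_{−r}^{ξ} g(ζ)dζ for some g ∈ L²([−r,0];ℝ) (so x₁ ∈ W^{1,2} with x₁(−r)=0), and let y = (y₀,y₁) with y₁ ∈ W^{1,2}([−r,0];ℝ), y₁′ = h ∈ L²([−r,0];ℝ), and y₁(0) = y₀. Then ⟨Ax, y⟩ = ⟨x, A*y⟩, i.e. (a₀x₀ + x₁(0))·y₀ + ∫_{−r}^0 (a₁(ξ)x₀ − g(ξ))·y₁(ξ)dξ = x₀·( a₀y₀ + ∫_{−r}^0 a₁(ξ)y₁(ξ)dξ ) + ∫_{−r}^0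 x₁(ξ)·h(ξ)dξ. -/
open MeasureTheory Set

theorem l2mul_aux {α : Type*} [MeasurableSpace α] {μ : Measure α} {f g : α → ℝ}
    (hf : MemLp f 2 μ) (hg : MemLp g 2 μ) :
    Integrable (fun x => f x * g x) μ := by
  have h1 : MemLp (f • g) 1 μ := hg.smul hf
  exact memLp_one_iff_integrable.mp h1

theorem memL2_of_continuousOn_aux (r : ℝ) {f : ℝ → ℝ} (hf : ContinuousOn f (Icc (-r) 0)) :
    MemLp f 2 (volume.restrict (Icc (-r) 0)) := by
  haveI : IsFiniteMeasure (volume.restrict (Icc (-r) (0:ℝ))) := by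
    constructor; rw [Measure.restrict_apply_univ]; exact measure_Icc_lt_top
  obtain ⟨C, hC⟩ := isCompact_Icc.exists_bound_of_continuousOn hf
  refine MemLp.of_bound (hf.aestronglyMeasurable measurableSet_Icc) C ?_
  filter_upwards [ae_restrict_mem measurableSet_Icc] with x hx using hC x hx

theorem fubini_tri_aux (r : ℝ) (g h : ℝ → ℝ)
    (hgi : IntegrableOn g (Icc (-r) 0) volume) (hhi : IntegrableOn h (Icc (-r) 0) volume) :
    (∫ ξ in Icc (-r) 0, g ξ * ∫ ζ in Icc (-r) ξ, h ζ)
      = ∫ ζ in Icc (-r) 0, (∫ ξ in Icc ζ 0, g ξ) * h ζ := by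
  set μ := volume.restrict (Icc (-r) (0:ℝ)) with hμ
  have hA : MeasurableSet {p : ℝ × ℝ | p.2 ≤ p.1} := measurableSet_le measurable_snd measurable_fst
  have hF : Integrable (fun p : ℝ × ℝ => g p.1 * h p.2) (μ.prod μ) := hgi.mul_prod hhi
  have hres : ∀ s : Set ℝ, MeasurableSet s → μ.restrict s = volume.restrict (s ∩ Icc (-r) 0) := by
    intro s hs; rw [hμ, Measure.restrict_restrict hs]
  have E1 : ∫ p, {p : ℝ × ℝ | p.2 ≤ p.1}.indicator (fun p => g p.1 * h p.2) p ∂(μ.prod μ)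
      = ∫ ξ in Icc (-r) 0, g ξ * ∫ ζ in Icc (-r) ξ, h ζ := by
    rw [MeasureTheory.integral_prod _ (hF.indicator hA)]
    apply integral_congr_ae
    filter_upwards [ae_restrict_mem measurableSet_Icc] with ξ hξ
    have e : (fun ζ => {p : ℝ × ℝ | p.2 ≤ p.1}.indicator (fun p => g p.1 * h p.2) (ξ, ζ))
        = (Iic ξ).indicator (fun ζ => g ξ * h ζ) := by
      funext ζ; by_cases hz : ζ ≤ ξ <;> simp [indicator, hz]
    rw [e, integral_indicator measurableSet_Iic, hres _ measurableSet_Iic]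
    have : Iic ξ ∩ Icc (-r) 0 = Icc (-r) ξ := by
      ext x; simp only [mem_inter_iff, mem_Iic, mem_Icc]
      exact ⟨fun ⟨h1, h2, _⟩ => ⟨h2, h1⟩, fun ⟨h1, h2⟩ => ⟨h2, h1, h2.trans hξ.2⟩⟩
    rw [this, integral_const_mul]
  have E2 : ∫ p, {p : ℝ × ℝ | p.2 ≤ p.1}.indicator (fun p => g p.1 * h p.2) p ∂(μ.prod μ)
      = ∫ ζ in Icc (-r) 0, (∫ ξ in Icc ζ 0, g ξ) * h ζ := by
    rw [MeasureTheory.integral_prod_symm _ (hF.indicator hA)]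
    apply integral_congr_ae
    filter_upwards [ae_restrict_mem measurableSet_Icc] with ζ hζ
    have e : (fun ξ => {p : ℝ × ℝ | p.2 ≤ p.1}.indicator (fun p => g p.1 * h p.2) (ξ, ζ))
        = (Ici ζ).indicator (fun ξ => g ξ * h ζ) := by
      funext ξ; by_cases hz : ζ ≤ ξ <;> simp [indicator, hz]
    rw [e, integral_indicator measurableSet_Ici, hres _ measurableSet_Ici]
    have : Ici ζ ∩ Icc (-r) 0 = Icc ζ 0 := by
      ext x; simp only [mem_inter_iff, mem_Ici, mem_Icc]
      exact ⟨fun ⟨h1, _, h2⟩ => ⟨h1, h2⟩, fun ⟨h1, h2⟩ => ⟨h1, hζ.1.trans h1, h2⟩⟩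
    rw [this, integral_mul_const]
  rw [← E1, E2]

/-- Duality between `A` and `A*`: for `x = (x₀,x₁) ∈ D(A)` (i.e. `x₁(ξ) = ∫_{−r}^ξ g`
with `g ∈ L²`, so `x₁ ∈ W^{1,2}` and `x₁(−r)=0`) and `y = (y₀,y₁) ∈ D(A*)`
(i.e. `y₁ ∈ W^{1,2}` with `y₁′ = h ∈ L²` and `y₁(0) = y₀`), one has `⟨Ax,y⟩ = ⟨x,A*y⟩`:
`(a₀x₀ + x₁(0))·y₀ + ∫_{−r}^0 (a₁(ξ)x₀ − g(ξ))·y₁(ξ)dξ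
  = x₀·(a₀y₀ + ∫_{−r}^0 a₁(ξ)y₁(ξ)dξ) + ∫_{−r}^0 x₁(ξ)·h(ξ)dξ`. -/
theorem duality_A_Astar (r a₀ : ℝ) (hr : 0 < r) (a₁ g h : ℝ → ℝ)
    (ha : MemLp a₁ 2 (volume.restrict (Set.Icc (-r) 0)))
    (hg : MemLp g 2 (volume.restrict (Set.Icc (-r) 0)))
    (hh : MemLp h 2 (volume.restrict (Set.Icc (-r) 0)))
    (x₀ y₀ : ℝ) (x₁ y₁ : ℝ → ℝ)
    (hx₁ : ∀ ξ, x₁ ξ = ∫ ζ in Set.Icc (-r) ξ, g ζ)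
    (hy₁ : ∀ ξ ∈ Set.Icc (-r) (0 : ℝ), y₁ ξ = y₁ (-r) + ∫ ζ in Set.Icc (-r) ξ, h ζ)
    (hy₀ : y₁ 0 = y₀) :
    (a₀ * x₀ + x₁ 0) * y₀ + (∫ ξ in Set.Icc (-r) 0, (a₁ ξ * x₀ - g ξ) * y₁ ξ)
      = x₀ * (a₀ * y₀ + ∫ ξ in Set.Icc (-r) 0, a₁ ξ * y₁ ξ) +
        ∫ ξ in Set.Icc (-r) 0, x₁ ξ * h ξ := by
  haveI : IsFiniteMeasure (volume.restrict (Icc (-r) (0:ℝ))) := by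
    constructor; rw [Measure.restrict_apply_univ]; exact measure_Icc_lt_top
  have h0S : (0:ℝ) ∈ Icc (-r) (0:ℝ) := ⟨by linarith, le_rfl⟩
  have hgi : IntegrableOn g (Icc (-r) 0) volume := hg.integrable one_le_two
  have hhi : IntegrableOn h (Icc (-r) 0) volume := hh.integrable one_le_two
  set H : ℝ → ℝ := fun ξ => ∫ ζ in Icc (-r) ξ, h ζ with hH
  set c : ℝ := y₁ (-r) with hc
  have hHcont : ContinuousOn H (Icc (-r) 0) := intervalIntegral.continuousOn_primitive_Icc hhi
  have hx₁cont : ContinuousOn x₁ (Icc (-r) 0) := by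
    have : x₁ = fun ξ => ∫ ζ in Icc (-r) ξ, g ζ := funext hx₁
    rw [this]; exact intervalIntegral.continuousOn_primitive_Icc hgi
  have hy₁ae : y₁ =ᵐ[volume.restrict (Icc (-r) 0)] fun ξ => c + H ξ := by
    filter_upwards [ae_restrict_mem measurableSet_Icc] with ξ hξ using hy₁ ξ hξ
  have hHmem : MemLp H 2 (volume.restrict (Icc (-r) 0)) := memL2_of_continuousOn_aux r hHcont
  have hy₁mem : MemLp y₁ 2 (volume.restrict (Icc (-r) 0)) :=
    (memL2_of_continuousOn_aux r (continuousOn_const.add hHcont)).ae_eq hy₁ae.symm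
  have hx₁mem : MemLp x₁ 2 (volume.restrict (Icc (-r) 0)) := memL2_of_continuousOn_aux r hx₁cont
  have iay : Integrable (fun ξ => a₁ ξ * y₁ ξ) (volume.restrict (Icc (-r) 0)) := l2mul_aux ha hy₁mem
  have igy : Integrable (fun ξ => g ξ * y₁ ξ) (volume.restrict (Icc (-r) 0)) := l2mul_aux hg hy₁mem
  have ixh : Integrable (fun ξ => x₁ ξ * h ξ) (volume.restrict (Icc (-r) 0)) := l2mul_aux hx₁mem hh
  have igH : Integrable (fun ξ => g ξ * H ξ) (volume.restrict (Icc (-r) 0)) := l2mul_aux hg hHmem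
  -- split the left-hand integral
  have split : ∫ ξ in Icc (-r) 0, (a₁ ξ * x₀ - g ξ) * y₁ ξ
      = x₀ * (∫ ξ in Icc (-r) 0, a₁ ξ * y₁ ξ) - ∫ ξ in Icc (-r) 0, g ξ * y₁ ξ := by
    have e : ∀ ξ, (a₁ ξ * x₀ - g ξ) * y₁ ξ = x₀ * (a₁ ξ * y₁ ξ) - g ξ * y₁ ξ := fun ξ => by ring
    simp_rw [e]
    rw [integral_sub (iay.const_mul x₀) igy, integral_const_mul]
  -- rewrite ∫ g·y₁
  have gy : ∫ ξ in Icc (-r) 0, g ξ * y₁ ξ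
      = (∫ ξ in Icc (-r) 0, g ξ) * c + ∫ ξ in Icc (-r) 0, g ξ * H ξ := by
    have : ∫ ξ in Icc (-r) 0, g ξ * y₁ ξ = ∫ ξ in Icc (-r) 0, (g ξ * c + g ξ * H ξ) := by
      apply integral_congr_ae
      filter_upwards [hy₁ae] with ξ hξ
      rw [hξ]; ring
    rw [this, integral_add (hgi.mul_const c) igH, integral_mul_const]
  -- decomposition of x₁ on the interval
  have e : ∀ ζ ∈ Icc (-r) (0:ℝ), x₁ ζ = (∫ ξ in Icc (-r) 0, g ξ) - ∫ ξ in Icc ζ 0, g ξ := by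
    intro ζ hζ
    have hsplit : ∫ ξ in Icc (-r) 0, g ξ = (∫ ξ in Icc (-r) ζ, g ξ) + ∫ ξ in Ioc ζ 0, g ξ := by
      rw [← Set.Icc_union_Ioc_eq_Icc hζ.1 hζ.2]
      exact setIntegral_union (Set.disjoint_left.mpr fun x hx hx' => absurd hx.2 (not_le.mpr hx'.1))
        measurableSet_Ioc
        (hgi.mono_set (Icc_subset_Icc_right hζ.2))
        (hgi.mono_set ((Set.Ioc_subset_Icc_self).trans (Icc_subset_Icc_left hζ.1)))
    rw [hx₁ ζ, hsplit]
    simp only [integral_Icc_eq_integral_Ioc]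
    ring
  -- rewrite ∫ x₁·h using Fubini
  have iq : Integrable (fun ζ => (∫ ξ in Icc ζ 0, g ξ) * h ζ) (volume.restrict (Icc (-r) 0)) := by
    apply Integrable.congr ((hhi.const_mul (∫ ξ in Icc (-r) 0, g ξ)).sub ixh)
    filter_upwards [ae_restrict_mem measurableSet_Icc] with ζ hζ
    simp only [Pi.sub_apply]
    rw [e ζ hζ]; ring
  have xh : ∫ ξ in Icc (-r) 0, x₁ ξ * h ξ
      = (∫ ξ in Icc (-r) 0, g ξ) * (∫ ξ in Icc (-r) 0, h ξ) - ∫ ξ in Icc (-r) 0, g ξ * H ξ := by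
    have e2 : ∫ ξ in Icc (-r) 0, x₁ ξ * h ξ
        = ∫ ζ in Icc (-r) 0, ((∫ ξ in Icc (-r) 0, g ξ) * h ζ - (∫ ξ in Icc ζ 0, g ξ) * h ζ) := by
      apply integral_congr_ae
      filter_upwards [ae_restrict_mem measurableSet_Icc] with ζ hζ
      rw [e ζ hζ]; ring
    rw [e2, integral_sub (hhi.const_mul _) iq, integral_const_mul,
      ← fubini_tri_aux r g h hgi hhi]
  have hx₁0 : x₁ 0 = ∫ ξ in Icc (-r) 0, g ξ := hx₁ 0
  have hy₀' : y₀ = c + ∫ ξ in Icc (-r) 0, h ξ := by rw [← hy₀, hy₁ 0 h0S]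
  rw [split, gy, xh, hx₁0, hy₀']
  ring
end
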